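/- Let 0 < δ ≤ 1, k ≥ 1 and let r₁,…,r_k be negative real numbers. Suppose u : (0,δ) × (−δ,δ)^k → ℂ is smooth and satisfies the transport equation x ∂u/∂x + Σ_{j=1}^{k} r_j y_j ∂u/∂y_j = 0 on (0,δ) × (−δ,δ)^k. Then there exists a smooth function û on the box ∏_{j=1}^{k} (−δ^{1−r_j}, δ^{1−r_j}) such that u(x,y) = û(y₁ x^{−r₁},…, y_k x^{−r_k}) for all (x,y) ∈ (0,δ) × (−δ,δ)^k. -/

import Mathlib

open Set Topology Filter

/-- **Smooth solutions of the radial transport equation are functions of `yⱼ x^{-rⱼ}`.**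
Let `0 < δ ≤ 1`, `k ≥ 1`, and `r₁, …, r_k < 0`.  If `u` is smooth on
`(0,δ) × (-δ,δ)^k` and satisfies `x ∂u/∂x + Σⱼ rⱼ yⱼ ∂u/∂yⱼ = 0` there (expressed as the
vanishing of the differential of `u` in the direction `(x, (rⱼ yⱼ)ⱼ)`), then there is a
smooth function `uhat` on the box `∏ⱼ (-δ^{1-rⱼ}, δ^{1-rⱼ})` with
`u(x,y) = uhat(y₁ x^{-r₁}, …, y_k x^{-r_k})`. -/
theorem transport_solution_is_function_of_blowup_coordinates
    (δ : ℝ) (hδ0 : 0 < δ) (hδ1 : δ ≤ 1) (k : ℕ) (hk : 1 ≤ k)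
    (r : Fin k → ℝ) (hr : ∀ j, r j < 0)
    (u : ℝ × (Fin k → ℝ) → ℂ)
    (hu : ContDiffOn ℝ (⊤ : ℕ∞) u
      (Set.Ioo 0 δ ×ˢ Set.univ.pi fun _ : Fin k => Set.Ioo (-δ) δ))
    (hPDE : ∀ p ∈ (Set.Ioo 0 δ ×ˢ Set.univ.pi fun _ : Fin k => Set.Ioo (-δ) δ),
      fderiv ℝ u p (p.1, fun j => r j * p.2 j) = 0) :
    ∃ uhat : (Fin k → ℝ) → ℂ,
      ContDiffOn ℝ (⊤ : ℕ∞) uhat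
        (Set.univ.pi fun j => Set.Ioo (-(δ ^ (1 - r j))) (δ ^ (1 - r j))) ∧
      ∀ x ∈ Set.Ioo (0:ℝ) δ, ∀ y ∈ (Set.univ.pi fun _ : Fin k => Set.Ioo (-δ) δ),
        u (x, y) = uhat (fun j => y j * x ^ (-(r j))) := by
  classical
  set D : Set (ℝ × (Fin k → ℝ)) :=
    Set.Ioo 0 δ ×ˢ Set.univ.pi fun _ : Fin k => Set.Ioo (-δ) δ with hDdef
  have hDopen : IsOpen D :=
    isOpen_Ioo.prod (isOpen_set_pi Set.finite_univ fun _ _ => isOpen_Ioo)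
  set I : (Fin k → ℝ) → Set ℝ :=
    fun z => {x | x ∈ Set.Ioo 0 δ ∧ ∀ j, z j * x ^ r j ∈ Set.Ioo (-δ) δ} with hIdef
  have hmemD : ∀ z x, x ∈ I z → (x, fun j => z j * x ^ r j) ∈ D := by
    intro z x hx
    exact ⟨hx.1, fun j _ => hx.2 j⟩
  -- convexity of the admissible set of `x`'s
  have hIconv : ∀ z, Convex ℝ (I z) := by
    intro z
    rw [convex_iff_ordConnected]
    constructor
    intro x₁ h₁ x₂ h₂ x hx
    have hx0 : 0 < x := lt_of_lt_of_le h₁.1.1 hx.1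
    refine ⟨⟨hx0, lt_of_le_of_lt hx.2 h₂.1.2⟩, fun j => ?_⟩
    have hpow : x ^ r j ≤ x₁ ^ r j :=
      Real.rpow_le_rpow_of_nonpos h₁.1.1 hx.1 (hr j).le
    have hpos : (0:ℝ) ≤ x ^ r j := (Real.rpow_pos_of_pos hx0 _).le
    rw [Set.mem_Ioo, ← abs_lt]
    calc |z j * x ^ r j| = |z j| * x ^ r j := by
          rw [abs_mul, abs_of_nonneg hpos]
      _ ≤ |z j| * x₁ ^ r j := by
          exact mul_le_mul_of_nonneg_left hpow (abs_nonneg _)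
      _ = |z j * x₁ ^ r j| := by
          rw [abs_mul, abs_of_nonneg (Real.rpow_pos_of_pos h₁.1.1 _).le]
      _ < δ := abs_lt.mpr ⟨(h₁.2 j).1, (h₁.2 j).2⟩
  -- `u` is constant along the admissible set of `x`'s
  have key : ∀ z, ∀ x₁ ∈ I z, ∀ x₂ ∈ I z,
      u (x₁, fun j => z j * x₁ ^ r j) = u (x₂, fun j => z j * x₂ ^ r j) := by
    intro z x₁ h₁ x₂ h₂
    set g : ℝ → ℂ := fun x => u (x, fun j => z j * x ^ r j) with hgdef
    have hderiv : ∀ x ∈ I z, HasFDerivWithinAt g (0 : ℝ →L[ℝ] ℂ) (I z) x := by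
      intro x hx
      have hx0 : 0 < x := hx.1.1
      set φ : ℝ → ℝ × (Fin k → ℝ) := fun x => (x, fun j => z j * x ^ r j) with hφdef
      have hφd : HasDerivAt φ (1, fun j => z j * (r j * x ^ (r j - 1))) x := by
        refine HasDerivAt.prodMk (hasDerivAt_id x) ?_
        rw [hasDerivAt_pi]
        intro j
        exact (Real.hasDerivAt_rpow_const (Or.inl hx0.ne')).const_mul (z j)
      have hpD : φ x ∈ D := hmemD z x hx
      have hud : HasFDerivAt u (fderiv ℝ u (φ x)) (φ x) :=
        ((hu.contDiffAt (hDopen.mem_nhds hpD)).differentiableAt (by simp)).hasFDerivAt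
      have hcomp : HasDerivAt g
          (fderiv ℝ u (φ x) (1, fun j => z j * (r j * x ^ (r j - 1)))) x :=
        hud.comp_hasDerivAt x hφd
      have hzero : fderiv ℝ u (φ x) (1, fun j => z j * (r j * x ^ (r j - 1))) = 0 := by
        have hp := hPDE (φ x) hpD
        have hsc : ((φ x).1, fun j => r j * (φ x).2 j) =
            x • ((1 : ℝ), fun j => z j * (r j * x ^ (r j - 1))) := by
          refine Prod.ext (by simp [hφdef]) ?_
          funext j
          show r j * (z j * x ^ r j) = x • (z j * (r j * x ^ (r j - 1)))
          have hx1 : x * x ^ (r j - 1) = x ^ r j := by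
            have h := Real.rpow_add hx0 1 (r j - 1)
            rw [Real.rpow_one] at h
            rw [← h]
            congr 1
            ring
          rw [smul_eq_mul]
          calc r j * (z j * x ^ r j) = r j * (z j * (x * x ^ (r j - 1))) := by rw [hx1]
            _ = x * (z j * (r j * x ^ (r j - 1))) := by ring
        rw [hsc, map_smul, smul_eq_zero] at hp
        exact hp.resolve_left hx0.ne'
      rw [hzero] at hcomp
      have : HasFDerivAt g (0 : ℝ →L[ℝ] ℂ) x := by
        convert hcomp.hasFDerivAt using 1
        ext t
        simp
        ext t
        simp
      exact this.hasFDerivWithinAt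
    have hnorm := (hIconv z).norm_image_sub_le_of_norm_hasFDerivWithin_le (C := 0)
      hderiv (fun x _ => by simp) h₁ h₂
    have : ‖g x₂ - g x₁‖ ≤ 0 := by simpa using hnorm
    have := norm_le_zero_iff.mp this
    have := sub_eq_zero.mp this
    exact this.symm
  set B : Set (Fin k → ℝ) :=
    Set.univ.pi fun j => Set.Ioo (-(δ ^ (1 - r j))) (δ ^ (1 - r j)) with hBdef
  -- the admissible set is nonempty for `z` in the box
  have hex : ∀ z ∈ B, (I z).Nonempty := by
    intro z hz
    have hS : {x : ℝ | 0 < x ∧ ∀ j, |z j| * x ^ r j < δ} ∈ 𝓝 δ := by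
      have h0 : {x : ℝ | 0 < x} ∈ 𝓝 δ := Ioi_mem_nhds hδ0
      have hj : ∀ j, {x : ℝ | |z j| * x ^ r j < δ} ∈ 𝓝 δ := by
        intro j
        have hc : ContinuousAt (fun x : ℝ => |z j| * x ^ r j) δ :=
          (Real.continuousAt_rpow_const δ (r j) (Or.inl hδ0.ne')).const_mul _
        have hval : |z j| * δ ^ r j < δ := by
          have hz' : |z j| < δ ^ (1 - r j) := abs_lt.mpr (hz j trivial)
          have hpow : (0:ℝ) < δ ^ r j := Real.rpow_pos_of_pos hδ0 _
          calc |z j| * δ ^ r j < δ ^ (1 - r j) * δ ^ r j :=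
                mul_lt_mul_of_pos_right hz' hpow
            _ = δ := by
                rw [← Real.rpow_add hδ0]
                norm_num
        exact hc.preimage_mem_nhds (Iio_mem_nhds hval)
      have hall : {x : ℝ | ∀ j, |z j| * x ^ r j < δ} ∈ 𝓝 δ := by
        have : (⋂ j, {x : ℝ | |z j| * x ^ r j < δ}) ∈ 𝓝 δ :=
          Filter.iInter_mem.mpr hj
        simpa [Set.setOf_forall] using this
      filter_upwards [h0, hall] with x hx1 hx2
      exact ⟨hx1, hx2⟩
    have hδcl : δ ∈ closure (Set.Ioo (0:ℝ) δ) := by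
      rw [closure_Ioo hδ0.ne]
      exact ⟨hδ0.le, le_rfl⟩
    obtain ⟨x, hxS, hxI⟩ := mem_closure_iff_nhds.mp hδcl _ hS
    refine ⟨x, hxI, fun j => ?_⟩
    have h := hxS.2 j
    rw [Set.mem_Ioo, ← abs_lt, abs_mul, abs_of_nonneg (Real.rpow_pos_of_pos hxS.1 _).le]
    exact h
  choose! xs hxs using hex
  refine ⟨fun z => u (xs z, fun j => z j * (xs z) ^ r j), ?_, ?_⟩
  · -- smoothness
    intro z hz
    have hx0 : xs z ∈ I z := hxs z hz
    set x₀ := xs z with hx₀def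
    set V : Set (Fin k → ℝ) := {w | ∀ j, w j * x₀ ^ r j ∈ Set.Ioo (-δ) δ} with hVdef
    have hVopen : IsOpen V := by
      have hVeq : V = ⋂ j, (fun w : Fin k → ℝ => w j * x₀ ^ r j) ⁻¹' Set.Ioo (-δ) δ := by
        ext w; simp [hVdef]
      rw [hVeq]
      exact isOpen_iInter_of_finite fun j =>
        isOpen_Ioo.preimage ((continuous_apply j).mul continuous_const)
    have hzV : z ∈ V := fun j => hx0.2 j
    have hx₀Iw : ∀ w ∈ V, x₀ ∈ I w := fun w hw => ⟨hx0.1, hw⟩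
    set ψ : (Fin k → ℝ) → ℝ × (Fin k → ℝ) :=
      fun w => (x₀, fun j => w j * x₀ ^ r j) with hψdef
    have hψcd : ContDiff ℝ (⊤ : ℕ∞) ψ := by
      refine ContDiff.prodMk contDiff_const ?_
      rw [contDiff_pi]
      intro j
      exact ((ContinuousLinearMap.proj j :
        (Fin k → ℝ) →L[ℝ] ℝ).contDiff).mul contDiff_const
    have hmaps : V ⊆ ψ ⁻¹' D := by
      intro w hw
      exact ⟨hx0.1, fun j _ => hw j⟩
    have hFcd : ContDiffOn ℝ (⊤ : ℕ∞) (u ∘ ψ) V :=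
      hu.comp hψcd.contDiffOn hmaps
    have h1 : ContDiffAt ℝ (⊤ : ℕ∞) (u ∘ ψ) z :=
      hFcd.contDiffAt (hVopen.mem_nhds hzV)
    have heq : ∀ᶠ w in nhdsWithin z B,
        u (xs w, fun j => w j * (xs w) ^ r j) = (u ∘ ψ) w := by
      filter_upwards [self_mem_nhdsWithin,
        nhdsWithin_le_nhds (hVopen.mem_nhds hzV)] with w hwB hwV
      exact key w (xs w) (hxs w hwB) x₀ (hx₀Iw w hwV)
    exact h1.contDiffWithinAt.congr_of_eventuallyEq heq
      (key z (xs z) hx0 x₀ (hx₀Iw z hzV))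
  · -- the representation formula
    intro x hx y hy
    set z : Fin k → ℝ := fun j => y j * x ^ (-(r j)) with hzdef
    have hzB : z ∈ B := by
      intro j _
      rw [Set.mem_Ioo, ← abs_lt]
      have hy' : |y j| < δ := abs_lt.mpr (hy j trivial)
      have hxp : x ^ (-(r j)) < δ ^ (-(r j)) :=
        Real.rpow_lt_rpow hx.1.le hx.2 (by linarith [hr j])
      have hxpos : (0:ℝ) ≤ x ^ (-(r j)) := (Real.rpow_pos_of_pos hx.1 _).le
      calc |z j| = |y j| * x ^ (-(r j)) := by
            rw [hzdef, abs_mul, abs_of_nonneg hxpos]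
        _ < δ * δ ^ (-(r j)) := mul_lt_mul'' hy' hxp (abs_nonneg _) hxpos
        _ = δ ^ (1 - r j) := by
            rw [show (1 : ℝ) - r j = 1 + -(r j) by ring, Real.rpow_add hδ0, Real.rpow_one]
    have hzx : ∀ j, z j * x ^ r j = y j := by
      intro j
      rw [hzdef]
      rw [mul_assoc, ← Real.rpow_add hx.1]
      simp
    have hxI : x ∈ I z := by
      refine ⟨hx, fun j => ?_⟩
      rw [hzx j]
      exact hy j trivial
    have hkey := key z x hxI (xs z) (hxs z hzB)
    have hyeq : (fun j => z j * x ^ r j) = y := funext hzx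
    rw [hyeq] at hkey
    exact hkey
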